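/- Let e be a Hermite–Biehler function and assume the de Branges space B(e) contains a nonzero element. Then there is at most one β ∈ [0, π) such that the function s_β belongs to B(e); that is, if β, γ ∈ [0, π), s_β ∈ B(e) and s_γ ∈ B(e), then β = γ. -/

import Mathlib

open MeasureTheory Complex

noncomputable section

/-- `f#(z) := conj (f (conj z))`. -/
def fsharp (f : ℂ → ℂ) : ℂ → ℂ := fun z => (starRingEnd ℂ) (f ((starRingEnd ℂ) z))

/-- Hermite–Biehler function: entire with `|e(conj z)| < |e z|` on the upper half-plane. -/
def IsHB (e : ℂ → ℂ) : Prop :=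
  Differentiable ℂ e ∧
  ∀ z : ℂ, 0 < z.im → ‖e ((starRingEnd ℂ) z)‖ < ‖e z‖

/-- Membership in the de Branges space `B(e)`. -/
def MemDB (e f : ℂ → ℂ) : Prop :=
  Differentiable ℂ f ∧
  Integrable (fun x : ℝ => ‖f x / e x‖ ^ 2) ∧
  ∃ c : ℝ, 0 ≤ c ∧ ∀ z : ℂ, 0 < z.im →
    ‖f z / e z‖ ≤ c / Real.sqrt z.im ∧
    ‖fsharp f z / e z‖ ≤ c / Real.sqrt z.im

/-- Squared norm in `B(e)`: `∫ |f(x)|² |e(x)|⁻² dx`. -/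
def dBnormSq (e f : ℂ → ℂ) : ℝ :=
  ∫ x : ℝ, ‖f x‖ ^ 2 / ‖e x‖ ^ 2

/-- Inner product in `B(e)`: `∫ conj (f x) * g x * |e x|⁻² dx`. -/
def dBinner (e f g : ℂ → ℂ) : ℂ :=
  ∫ x : ℝ, (starRingEnd ℂ) (f x) * g x / (((‖e x‖ : ℝ) : ℂ)) ^ 2

/-- The reproducing kernel of `B(e)`. -/
def dBkernel (e : ℂ → ℂ) (z w : ℂ) : ℂ :=
  if z = (starRingEnd ℂ) w then
    (deriv (fsharp e) z * e z - deriv e z * fsharp e z) / (2 * Real.pi * Complex.I)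
  else
    (fsharp e z * e ((starRingEnd ℂ) w) - e z * fsharp e ((starRingEnd ℂ) w)) /
      (2 * Real.pi * Complex.I * (z - (starRingEnd ℂ) w))

/-- `s_β(z) := (i/2) (e^{iβ} e(z) − e^{−iβ} e#(z))`. -/
def sfun (e : ℂ → ℂ) (β : ℝ) (z : ℂ) : ℂ :=
  Complex.I / 2 *
    (Complex.exp (Complex.I * β) * e z - Complex.exp (-(Complex.I * β)) * fsharp e z)

end

/-- If `B(e)` contains a nonzero element, at most one of the functions
`s_β`, `β ∈ [0, π)`, belongs to `B(e)`. -/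
theorem statement6 (e : ℂ → ℂ) (he : IsHB e)
    (hne : ∃ f : ℂ → ℂ, MemDB e f ∧ f ≠ 0)
    (β γ : ℝ) (hβ : β ∈ Set.Ico 0 Real.pi) (hγ : γ ∈ Set.Ico 0 Real.pi)
    (hsβ : MemDB e (sfun e β)) (hsγ : MemDB e (sfun e γ)) : β = γ := by
  by_contra hne'
  -- sin (β - γ) ≠ 0
  have hs : Real.sin (β - γ) ≠ 0 := by
    rcases lt_or_gt_of_ne hne' with h | h
    · have h1 : 0 < Real.sin (γ - β) :=
        Real.sin_pos_of_pos_of_lt_pi (by linarith) (by linarith [hβ.1, hγ.2])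
      intro h0
      rw [show β - γ = -(γ - β) by ring, Real.sin_neg] at h0
      linarith
    · have h1 : 0 < Real.sin (β - γ) :=
        Real.sin_pos_of_pos_of_lt_pi (by linarith) (by linarith [hγ.1, hβ.2])
      linarith
  set S : ℝ := |Real.sin (β - γ)| with hS
  have hSpos : 0 < S := abs_pos.mpr hs
  -- key identity
  have key : ∀ z, (Real.sin (β - γ) : ℂ) * e z =
      Complex.exp (-(Complex.I*β)) * sfun e γ z - Complex.exp (-(Complex.I*γ)) * sfun e β z := by
    intro z
    have h1 : (Real.sin (β - γ) : ℂ) = Complex.sin ((β:ℂ) - γ) := by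
      rw [show ((β:ℂ)-γ) = ((β-γ:ℝ):ℂ) by push_cast; ring, Complex.ofReal_sin]
    have e1 : Complex.exp ((-((β:ℂ) - γ)) * Complex.I)
        = Complex.exp (-(Complex.I*β)) * Complex.exp (Complex.I*γ) := by
      rw [← Complex.exp_add]; congr 1; ring
    have e2 : Complex.exp (((β:ℂ) - γ) * Complex.I)
        = Complex.exp (Complex.I*β) * Complex.exp (-(Complex.I*γ)) := by
      rw [← Complex.exp_add]; congr 1; ring
    rw [h1]
    simp only [Complex.sin, sfun]
    rw [e1, e2]
    ring
  obtain ⟨-, -, c₁, hc₁, hb₁⟩ := hsβ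
  obtain ⟨-, -, c₂, hc₂, hb₂⟩ := hsγ
  set t : ℝ := (c₁ + c₂) / S + 1 with ht
  have htpos : 0 < t := by positivity
  set z : ℂ := Complex.I * ((t^2 : ℝ) : ℂ) with hz
  have him : z.im = t ^ 2 := by simp [hz, ← Complex.ofReal_pow]
  have him' : 0 < z.im := by rw [him]; positivity
  have hez : 0 < ‖e z‖ :=
    lt_of_le_of_lt (norm_nonneg _) (he.2 z him')
  have hsq : Real.sqrt z.im = t := by
    rw [him, Real.sqrt_sq htpos.le]
  -- bounds
  have hbβ : ‖sfun e β z‖ ≤ c₁ / t * ‖e z‖ := by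
    have := (hb₁ z him').1
    rw [norm_div, hsq, div_le_iff₀ hez] at this
    linarith
  have hbγ : ‖sfun e γ z‖ ≤ c₂ / t * ‖e z‖ := by
    have := (hb₂ z him').1
    rw [norm_div, hsq, div_le_iff₀ hez] at this
    linarith
  -- take abs of key
  have habs1 : ‖Complex.exp (-(Complex.I*(β:ℂ)))‖ = 1 := by
    rw [Complex.norm_exp]; simp
  have habs2 : ‖Complex.exp (-(Complex.I*(γ:ℂ)))‖ = 1 := by
    rw [Complex.norm_exp]; simp
  have hmain : S * ‖e z‖ ≤
      ‖sfun e γ z‖ + ‖sfun e β z‖ := by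
    have h := congrArg norm (key z)
    rw [norm_mul, Complex.norm_real, Real.norm_eq_abs] at h
    calc S * ‖e z‖ = ‖
          (Complex.exp (-(Complex.I*β)) * sfun e γ z - Complex.exp (-(Complex.I*γ)) * sfun e β z)‖ := h
      _ ≤ ‖Complex.exp (-(Complex.I*β)) * sfun e γ z‖
          + ‖Complex.exp (-(Complex.I*γ)) * sfun e β z‖ := by
            exact (norm_sub_le _ _)
      _ = ‖sfun e γ z‖ + ‖sfun e β z‖ := by
            rw [norm_mul, norm_mul, habs1, habs2, one_mul, one_mul]
  have hfinal : S * t ≤ c₁ + c₂ := by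
    have h2 : S * ‖e z‖ ≤ (c₂ / t + c₁ / t) * ‖e z‖ := by
      nlinarith
    have h3 : S ≤ (c₁ + c₂) / t := by
      have h4 := (mul_le_mul_iff_of_pos_right hez).mp h2
      rw [← add_div, add_comm c₂ c₁] at h4
      exact h4
    calc S * t ≤ ((c₁ + c₂) / t) * t := mul_le_mul_of_nonneg_right h3 htpos.le
      _ = c₁ + c₂ := by field_simp
  have : S * t = (c₁ + c₂) + S := by
    rw [ht]; field_simp
  linarith
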